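/- Let n ≥ 2 and 1 ≤ k ≤ n−1, and let U ∈ U(n) be a unitary matrix written in block form U = [[X, Y], [Z, V]] with X ∈ ℂ^{(n−k)×k}, Y ∈ ℂ^{(n−k)×(n−k)}, Z ∈ ℂ^{k×k}, V ∈ ℂ^{k×(n−k)}. If Z is invertible, then Y is invertible and tr((Z Zᴴ)⁻¹) − k = tr((Y Yᴴ)⁻¹) − (n−k). -/
import Mathlib
open Matrix

/-- For a block-decomposed unitary matrix `U = [[X, Y], [Z, V]]` with `Z` invertible, `Y` is
invertible and `tr((Z Zᴴ)⁻¹) − k = tr((Y Yᴴ)⁻¹) − (n − k)`. -/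
theorem trace_inv_self_mul_conjTranspose_of_unitary_blocks
    (n k : ℕ) (hn : 2 ≤ n) (hk1 : 1 ≤ k) (hk2 : k ≤ n - 1)
    (X : Matrix (Fin (n - k)) (Fin k) ℂ) (Y : Matrix (Fin (n - k)) (Fin (n - k)) ℂ)
    (Z : Matrix (Fin k) (Fin k) ℂ) (V : Matrix (Fin k) (Fin (n - k)) ℂ)
    (hU₁ : (Matrix.fromBlocks X Y Z V)ᴴ * Matrix.fromBlocks X Y Z V = 1)
    (hU₂ : Matrix.fromBlocks X Y Z V * (Matrix.fromBlocks X Y Z V)ᴴ = 1)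
    (hZ : IsUnit Z.det) :
    IsUnit Y.det ∧
      ((Z * Zᴴ)⁻¹).trace - (k : ℂ) = ((Y * Yᴴ)⁻¹).trace - ((n - k : ℕ) : ℂ) := by
  have h1 : Xᴴ * X + Zᴴ * Z = 1 := by
    have := congrArg Matrix.toBlocks₁₁ hU₁
    simpa [Matrix.fromBlocks_conjTranspose, Matrix.fromBlocks_multiply,
      Matrix.toBlocks_fromBlocks₁₁, ← Matrix.fromBlocks_one] using this
  have h2 : X * Xᴴ + Y * Yᴴ = 1 := by
    have := congrArg Matrix.toBlocks₁₁ hU₂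
    simpa [Matrix.fromBlocks_conjTranspose, Matrix.fromBlocks_multiply,
      Matrix.toBlocks_fromBlocks₁₁, ← Matrix.fromBlocks_one] using this
  have hZZ : Zᴴ * Z = 1 - Xᴴ * X := by rw [← h1]; abel
  have hYY : Y * Yᴴ = 1 - X * Xᴴ := by rw [← h2]; abel
  have hdetZZ : IsUnit (1 - Xᴴ * X).det := by
    rw [← hZZ, det_mul, det_conjTranspose]
    exact hZ.star.mul hZ
  have hdetYY : IsUnit (1 - X * Xᴴ).det := by
    rwa [det_one_sub_mul_comm]
  have hY : IsUnit Y.det := by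
    have : IsUnit (Y.det * Yᴴ.det) := by rw [← det_mul, hYY]; exact hdetYY
    exact isUnit_of_mul_isUnit_left this
  refine ⟨hY, ?_⟩
  have trZ : ((Z * Zᴴ)⁻¹).trace = ((Zᴴ * Z)⁻¹).trace := by
    rw [Matrix.mul_inv_rev, Matrix.mul_inv_rev, trace_mul_comm]
  rw [trZ, hZZ, hYY]
  have hcomm : (1 - X * Xᴴ) * X = X * (1 - Xᴴ * X) := by
    simp [Matrix.sub_mul, Matrix.mul_sub, Matrix.mul_assoc]
  have hswap : X * (1 - Xᴴ * X)⁻¹ = (1 - X * Xᴴ)⁻¹ * X := by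
    calc X * (1 - Xᴴ * X)⁻¹
        = ((1 - X * Xᴴ)⁻¹ * (1 - X * Xᴴ)) * (X * (1 - Xᴴ * X)⁻¹) := by
          rw [Matrix.nonsing_inv_mul _ hdetYY, Matrix.one_mul]
      _ = (1 - X * Xᴴ)⁻¹ * (((1 - X * Xᴴ) * X) * (1 - Xᴴ * X)⁻¹) := by
          rw [Matrix.mul_assoc, Matrix.mul_assoc]
      _ = (1 - X * Xᴴ)⁻¹ * ((X * (1 - Xᴴ * X)) * (1 - Xᴴ * X)⁻¹) := by rw [hcomm]
      _ = (1 - X * Xᴴ)⁻¹ * X := by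
          rw [Matrix.mul_assoc, Matrix.mul_nonsing_inv _ hdetZZ, Matrix.mul_one]
  have e1 : ((1 - Xᴴ * X)⁻¹).trace - (k : ℂ) = ((1 - Xᴴ * X)⁻¹ * (Xᴴ * X)).trace := by
    have h := Matrix.nonsing_inv_mul _ hdetZZ
    rw [Matrix.mul_sub, Matrix.mul_one, sub_eq_iff_eq_add] at h
    have : (1 - Xᴴ * X)⁻¹ * (Xᴴ * X) = (1 - Xᴴ * X)⁻¹ - 1 := by
      rw [eq_sub_iff_add_eq, add_comm]; exact h.symm
    rw [this, trace_sub, trace_one]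
    simp
  have e2 : ((1 - X * Xᴴ)⁻¹).trace - ((n - k : ℕ) : ℂ) = ((1 - X * Xᴴ)⁻¹ * (X * Xᴴ)).trace := by
    have h := Matrix.nonsing_inv_mul _ hdetYY
    rw [Matrix.mul_sub, Matrix.mul_one, sub_eq_iff_eq_add] at h
    have : (1 - X * Xᴴ)⁻¹ * (X * Xᴴ) = (1 - X * Xᴴ)⁻¹ - 1 := by
      rw [eq_sub_iff_add_eq, add_comm]; exact h.symm
    rw [this, trace_sub, trace_one]
    simp
  rw [e1, e2]
  rw [← Matrix.mul_assoc, trace_mul_comm, ← Matrix.mul_assoc, hswap, Matrix.mul_assoc,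
    trace_mul_comm, Matrix.mul_assoc]
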